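/- arXiv:2001.06061 — 9 statements merged into one kernel-verified Lean document; each statement's English description precedes it below -/
import Mathlib

section
/- Let (R,σ) be a ring with involution having no zero divisors which is σ-Euclidean, with stathm Φ. Then for all a, b ∈ R with a·σ(b) ∈ R⁺ there exist g, s, t ∈ R such that: (i) g = a·σ(s) − b·σ(t); (ii) s·σ(t) ∈ R⁺; and (iii) g is a right greatest common divisor of a and b, i.e. a ∈ g·R and b ∈ g·R, and every r ∈ R with a ∈ r·R and b ∈ r·R satisfies g ∈ r·R. -/
/-- A ring `R` with involution `σ` is `σ`-Euclidean if there are a well-ordered set `W`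
and a stathm `Φ : R → W` such that for all `a b : R` with `b ≠ 0` and `a * σ b ∈ R⁺`
there is `q ∈ R⁺` with `Φ (a - b * q) < Φ b`. -/
def SigmaEuclidean {R : Type*} [Ring R] (σ : R → R) : Prop :=
  ∃ (W : Type) (r : W → W → Prop) (Φ : R → W), IsWellOrder W r ∧
    ∀ a b : R, b ≠ 0 → σ (a * σ b) = a * σ b →
      ∃ q : R, σ q = q ∧ r (Φ (a - b * q)) (Φ b)

/-- If `(R, σ)` is a ring with involution, without zero divisors, and is
`σ`-Euclidean, then for all `a b : R` with `a * σ b` fixed by `σ` there exist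
`g s t : R` with `g = a * σ s - b * σ t`, `s * σ t` fixed by `σ`, and `g` a right GCD
of `a` and `b`. -/
theorem twisted_euclidean_gcd {R : Type*} [Ring R] (σ : R → R)
    (hadd : ∀ x y : R, σ (x + y) = σ x + σ y)
    (hmul : ∀ x y : R, σ (x * y) = σ y * σ x)
    (hinvol : ∀ x : R, σ (σ x) = x)
    (hnzd : ∀ x y : R, x * y = 0 → x = 0 ∨ y = 0)
    (heuc : SigmaEuclidean σ) :
    ∀ a b : R, σ (a * σ b) = a * σ b →
      ∃ g s t : R,
        g = a * σ s - b * σ t ∧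
        σ (s * σ t) = s * σ t ∧
        (∃ u : R, a = g * u) ∧
        (∃ u : R, b = g * u) ∧
        (∀ r : R, (∃ u : R, a = r * u) → (∃ u : R, b = r * u) → ∃ u : R, g = r * u) := by
  obtain ⟨W, rel, Φ, hwo, hstep⟩ := heuc
  have hσ0 : σ 0 = 0 := by
    have h := hadd 0 0
    rw [add_zero] at h
    exact (left_eq_add.mp h)
  have hσ1 : σ (1 : R) = 1 := by
    have h3 : σ (σ (1 : R)) = σ 1 * σ (σ 1) := by
      have := hmul (σ (1 : R)) 1; rwa [mul_one] at this
    rw [hinvol, mul_one] at h3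
    exact h3.symm
  have hσneg : ∀ x : R, σ (-x) = -σ x := by
    intro x
    have h := hadd x (-x)
    rw [add_neg_cancel, hσ0] at h
    exact eq_neg_of_add_eq_zero_right h.symm
  have key : ∀ w : W, ∀ b a : R, Φ b = w → σ (a * σ b) = a * σ b →
      ∃ g s t : R,
        g = a * σ s - b * σ t ∧
        σ (s * σ t) = s * σ t ∧
        (∃ u : R, a = g * u) ∧
        (∃ u : R, b = g * u) ∧
        (∀ r : R, (∃ u : R, a = r * u) → (∃ u : R, b = r * u) → ∃ u : R, g = r * u) := by
    intro w
    induction w using hwo.toIsWellFounded.wf.induction with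
    | _ w ih =>
      intro b a hΦ hab
      by_cases hb : b = 0
      · subst hb
        refine ⟨a, 1, 0, ?_, ?_, ⟨1, (mul_one a).symm⟩, ⟨0, (mul_zero a).symm⟩, ?_⟩
        · rw [hσ1, hσ0]; simp
        · simp [hσ0]
        · rintro r ⟨u, hu⟩ _; exact ⟨u, hu⟩
      · obtain ⟨q, hq, hlt⟩ := hstep a b hb hab
        have hba : b * σ a = a * σ b := by
          have h := hmul a (σ b)
          rw [hinvol] at h
          rw [← hab, h]
        set a' := a - b * q with ha'
        have h1 : σ a' = σ a - q * σ b := by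
          rw [ha', sub_eq_add_neg, hadd, hσneg, hmul, hq, sub_eq_add_neg]
        have h3 : b * σ a' = a' * σ b := by
          rw [h1, ha', mul_sub, sub_mul, hba, mul_assoc]
        have hcond : σ (b * σ a') = b * σ a' := by
          rw [hmul, hinvol, h3]
        have hΦlt : rel (Φ a') w := hΦ ▸ hlt
        obtain ⟨g, s', t', hg, hst', ⟨u1, hu1⟩, ⟨u2, hu2⟩, hgcd⟩ :=
          ih (Φ a') hΦlt a' b rfl hcond
        have hσt : σ (-s' - t' * q) = -σ s' - q * σ t' := by
          rw [sub_eq_add_neg, hadd, hσneg, hσneg, hmul, hq, sub_eq_add_neg]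
        have hσs : σ (-t') = -σ t' := hσneg t'
        have hc : t' * σ s' = s' * σ t' := by
          rw [← hst', hmul, hinvol]
        have haa : a = a' + b * q := by rw [ha']; abel
        refine ⟨g, -t', -s' - t' * q, ?_, ?_, ?_, ⟨u1, hu1⟩, ?_⟩
        · rw [hσs, hσt, hg, ha']
          noncomm_ring
        · have e1 : (-t') * σ (-s' - t' * q) = t' * σ s' + t' * (q * σ t') := by
            rw [hσt]; noncomm_ring
          rw [e1, hadd]
          have eA : σ (t' * σ s') = t' * σ s' := by
            rw [hmul, hinvol, hc]
          have eB : σ (t' * (q * σ t')) = t' * (q * σ t') := by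
            rw [hmul, hmul, hinvol, hq, mul_assoc]
          rw [eA, eB]
        · refine ⟨u2 + u1 * q, ?_⟩
          rw [haa, hu2, hu1]
          noncomm_ring
        · rintro r ⟨u, hu⟩ ⟨v, hv⟩
          refine hgcd r ⟨v, hv⟩ ⟨u - v * q, ?_⟩
          rw [ha', hu, hv]
          noncomm_ring
  intro a b hab
  exact key (Φ b) b a rfl hab
end

section
/- Let (R,σ) be a ring with involution having no zero divisors which is σ-Euclidean. Then for all a, b ∈ R with a·σ(b) ∈ R⁺, the right ideal a·R + b·R is principal: there exists g ∈ R such that a·R + b·R = g·R. -/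
/-- If `(R, σ)` is a ring with involution, without zero divisors, and is
`σ`-Euclidean, then for all `a b : R` with `a * σ b` fixed by `σ`, the right ideal
`a·R + b·R` is principal. -/
theorem twisted_euclidean_principal {R : Type*} [Ring R] (σ : R → R)
    (hadd : ∀ x y : R, σ (x + y) = σ x + σ y)
    (hmul : ∀ x y : R, σ (x * y) = σ y * σ x)
    (hinvol : ∀ x : R, σ (σ x) = x)
    (hnzd : ∀ x y : R, x * y = 0 → x = 0 ∨ y = 0)
    (heuc : SigmaEuclidean σ) :
    ∀ a b : R, σ (a * σ b) = a * σ b →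
      ∃ g : R, ∀ x : R, (∃ s t : R, x = a * s + b * t) ↔ (∃ u : R, x = g * u) := by
  obtain ⟨W, r, Φ, hwo, H⟩ := heuc
  have wf : WellFounded r := hwo.toIsWellFounded.wf
  have hσ0 : σ 0 = 0 := by
    have := hadd 0 0
    simp only [add_zero] at this
    exact add_eq_left.mp this.symm
  have hneg : ∀ x : R, σ (-x) = -σ x := by
    intro x
    have := hadd x (-x)
    simp only [add_neg_cancel, hσ0] at this
    exact (neg_eq_of_add_eq_zero_right this.symm).symm
  have hsub : ∀ x y : R, σ (x - y) = σ x - σ y := by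
    intro x y
    rw [sub_eq_add_neg, hadd, hneg, sub_eq_add_neg]
  suffices h : ∀ w : W, ∀ b a : R, Φ b = w → σ (a * σ b) = a * σ b →
      ∃ g : R, ∀ x : R, (∃ s t : R, x = a * s + b * t) ↔ (∃ u : R, x = g * u) by
    intro a b hab
    exact h (Φ b) b a rfl hab
  intro w
  induction w using wf.induction with
  | _ w ih =>
    intro b a hΦ hab
    by_cases hb : b = 0
    · subst hb
      refine ⟨a, fun x => ⟨?_, ?_⟩⟩
      · rintro ⟨s, t, rfl⟩; exact ⟨s, by simp⟩
      · rintro ⟨u, rfl⟩; exact ⟨u, 0, by simp⟩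
    · obtain ⟨q, hq, hlt⟩ := H a b hb hab
      have key : b * σ a = a * σ b := by
        calc b * σ a = σ (σ b) * σ a := by rw [hinvol]
          _ = σ (a * σ b) := (hmul _ _).symm
          _ = a * σ b := hab
      have hbq : σ (b * q) = q * σ b := by rw [hmul, hq]
      have hab' : σ (b * σ (a - b * q)) = b * σ (a - b * q) := by
        have e1 : b * σ (a - b * q) = b * σ a - b * (q * σ b) := by
          rw [hsub, hbq, mul_sub]
        have e2 : σ (b * σ a) = a * σ b := by rw [hmul, hinvol]
        have e3 : σ (b * (q * σ b)) = b * (q * σ b) := by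
          rw [hmul, hmul, hinvol, hq, mul_assoc]
        rw [e1, hsub, e2, e3, key]
      obtain ⟨g, hg⟩ := ih (Φ (a - b * q)) (hΦ ▸ hlt) (a - b * q) b rfl hab'
      refine ⟨g, fun x => ⟨?_, ?_⟩⟩
      · rintro ⟨s, t, rfl⟩
        exact (hg _).mp ⟨q * s + t, s, by noncomm_ring⟩
      · rintro ⟨u, rfl⟩
        obtain ⟨s, t, h⟩ := (hg _).mpr ⟨u, rfl⟩
        exact ⟨t, s - q * t, by rw [h]; noncomm_ring⟩
end

section
/- Let (R,σ) be a ring with involution having no zero divisors which is σ-Euclidean. Then SL^σ(2,R) = E^σ(2,R); that is, a 2×2 matrix M over R satisfies M·σ̂(M) = σ̂(M)·M = 1 if and only if M is a finite product of the elementary matrices [[1,τ],[0,1]] (τ ∈ R⁺), [[u,0],[0,σ(u)⁻¹]] (u a unit of R), and [[0,1],[−1,0]]. -/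
/-- The twisted adjugate involution `σ̂` on 2×2 matrices over `R`. -/
def hatSigma {R : Type*} [Ring R] (σ : R → R) (M : Matrix (Fin 2) (Fin 2) R) :
    Matrix (Fin 2) (Fin 2) R :=
  !![σ (M 1 1), -σ (M 0 1); -σ (M 1 0), σ (M 0 0)]

/-- The set of elementary matrices generating `E^σ(2,R)`: upper unipotent matrices with
`σ`-fixed entry, diagonal matrices `[[u,0],[0,σ(u)⁻¹]]` for units `u`, and
`[[0,1],[-1,0]]`. -/
def ElemMatrices {R : Type*} [Ring R] (σ : R → R) : Set (Matrix (Fin 2) (Fin 2) R) :=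
  {M | ∃ τ : R, σ τ = τ ∧ M = !![1, τ; 0, 1]} ∪
  {M | ∃ u v : R, u * v = 1 ∧ v * u = 1 ∧ M = !![u, 0; 0, σ v]} ∪
  {!![0, 1; -1, 0]}

lemma hatSigma_mul {R : Type*} [Ring R] (σ : R → R)
    (hadd : ∀ x y : R, σ (x + y) = σ x + σ y)
    (hmul : ∀ x y : R, σ (x * y) = σ y * σ x)
    (M N : Matrix (Fin 2) (Fin 2) R) :
    hatSigma σ (M * N) = hatSigma σ N * hatSigma σ M := by
  ext i j
  fin_cases i <;> fin_cases j <;>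
    simp [hatSigma, Matrix.mul_apply, Fin.sum_univ_two, hadd, hmul] <;> abel

/-- The submonoid of matrices satisfying the twisted SL condition. -/
def SLsub {R : Type*} [Ring R] (σ : R → R)
    (hadd : ∀ x y : R, σ (x + y) = σ x + σ y)
    (hmul : ∀ x y : R, σ (x * y) = σ y * σ x)
    (h0 : σ 0 = 0) (h1 : σ 1 = 1) : Submonoid (Matrix (Fin 2) (Fin 2) R) where
  carrier := {M | M * hatSigma σ M = 1 ∧ hatSigma σ M * M = 1}
  one_mem' := by
    have h : hatSigma σ (1 : Matrix (Fin 2) (Fin 2) R) = 1 := by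
      ext i j
      fin_cases i <;> fin_cases j <;> simp [hatSigma, h0, h1, Matrix.one_apply]
    constructor <;> simp [h]
  mul_mem' := by
    intro M N hM hN
    constructor
    · rw [hatSigma_mul σ hadd hmul, mul_assoc, ← mul_assoc N, hN.1, one_mul, hM.1]
    · rw [hatSigma_mul σ hadd hmul, mul_assoc, ← mul_assoc (hatSigma σ M), hM.2, one_mul, hN.2]

lemma mem_SLsub {R : Type*} [Ring R] {σ : R → R}
    {hadd : ∀ x y : R, σ (x + y) = σ x + σ y}
    {hmul : ∀ x y : R, σ (x * y) = σ y * σ x}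
    {h0 : σ 0 = 0} {h1 : σ 1 = 1} {M : Matrix (Fin 2) (Fin 2) R} :
    M ∈ SLsub σ hadd hmul h0 h1 ↔ (M * hatSigma σ M = 1 ∧ hatSigma σ M * M = 1) :=
  Iff.rfl

/-- If `(R, σ)` is a ring with involution, without zero divisors, and is
`σ`-Euclidean, then `SL^σ(2,R) = E^σ(2,R)`: a matrix `M` satisfies
`M * σ̂(M) = σ̂(M) * M = 1` iff `M` is a finite product of elementary matrices. -/
theorem twisted_SL_eq_E {R : Type*} [Ring R] (σ : R → R)
    (hadd : ∀ x y : R, σ (x + y) = σ x + σ y)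
    (hmul : ∀ x y : R, σ (x * y) = σ y * σ x)
    (hinvol : ∀ x : R, σ (σ x) = x)
    (hnzd : ∀ x y : R, x * y = 0 → x = 0 ∨ y = 0)
    (heuc : SigmaEuclidean σ) :
    ∀ M : Matrix (Fin 2) (Fin 2) R,
      (M * hatSigma σ M = 1 ∧ hatSigma σ M * M = 1) ↔
        M ∈ Submonoid.closure (ElemMatrices σ) := by
  classical
  obtain ⟨W, rel, Φ, hwo, hEuc⟩ := heuc
  -- basic facts about σ
  have h0 : σ 0 = 0 := by
    have h := hadd 0 0
    rw [add_zero] at h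
    have h' : σ 0 + 0 = σ 0 + σ 0 := by rw [add_zero]; exact h
    exact (add_left_cancel h').symm
  have h1 : σ 1 = 1 := by
    have h := hmul (σ 1) 1
    rw [mul_one, hinvol 1] at h
    rw [mul_one] at h
    exact h.symm
  have hneg : ∀ x : R, σ (-x) = -σ x := by
    intro x
    have h := hadd x (-x)
    rw [add_neg_cancel, h0] at h
    exact (neg_eq_of_add_eq_zero_right h.symm).symm
  -- membership of generators
  have hUmem : ∀ τ : R, σ τ = τ →
      !![1, τ; 0, 1] ∈ Submonoid.closure (ElemMatrices σ) := fun τ hτ =>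
    Submonoid.subset_closure (Or.inl (Or.inl ⟨τ, hτ, rfl⟩))
  have hDmem : ∀ u v : R, u * v = 1 → v * u = 1 →
      !![u, 0; 0, σ v] ∈ Submonoid.closure (ElemMatrices σ) := fun u v huv hvu =>
    Submonoid.subset_closure (Or.inl (Or.inr ⟨u, v, huv, hvu, rfl⟩))
  have hSmem : !![0, 1; -1, 0] ∈ Submonoid.closure (ElemMatrices σ) :=
    Submonoid.subset_closure (Or.inr rfl)
  -- the easy direction: generators satisfy the SL condition
  have hgen : ElemMatrices σ ⊆ (SLsub σ hadd hmul h0 h1 : Set (Matrix (Fin 2) (Fin 2) R)) := by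
    rintro M ((⟨τ, hτ, rfl⟩ | ⟨u, v, huv, hvu, rfl⟩) | rfl)
    · constructor <;> (ext i j; fin_cases i <;> fin_cases j <;>
        simp [hatSigma, Matrix.mul_apply, Fin.sum_univ_two, h0, h1, hτ, Matrix.one_apply])
    · have e1 : σ v * σ u = 1 := by rw [← hmul, huv, h1]
      have e2 : σ u * σ v = 1 := by rw [← hmul, hvu, h1]
      constructor <;> (ext i j; fin_cases i <;> fin_cases j <;>
        simp [hatSigma, Matrix.mul_apply, Fin.sum_univ_two, h0, h1, hinvol, huv, hvu, e1, e2,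
          Matrix.one_apply])
    · constructor <;> (ext i j; fin_cases i <;> fin_cases j <;>
        simp [hatSigma, Matrix.mul_apply, Fin.sum_univ_two, h0, h1, hneg, Matrix.one_apply])
  have easy : ∀ M : Matrix (Fin 2) (Fin 2) R, M ∈ Submonoid.closure (ElemMatrices σ) →
      M * hatSigma σ M = 1 ∧ hatSigma σ M * M = 1 := fun M hM =>
    (Submonoid.closure_le.2 hgen) hM
  -- the hard direction, by well-founded induction on Φ (M 1 0)
  have wf : WellFounded rel := hwo.toIsWellFounded.wf
  have main : ∀ w : W, ∀ M : Matrix (Fin 2) (Fin 2) R,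
      M * hatSigma σ M = 1 → hatSigma σ M * M = 1 → Φ (M 1 0) = w →
      M ∈ Submonoid.closure (ElemMatrices σ) := by
    intro w
    refine wf.induction
      (C := fun w => ∀ M : Matrix (Fin 2) (Fin 2) R,
        M * hatSigma σ M = 1 → hatSigma σ M * M = 1 → Φ (M 1 0) = w →
        M ∈ Submonoid.closure (ElemMatrices σ)) w ?_
    intro w ih M hM1 hM2 hw
    have h00 := congrFun (congrFun hM1 0) 0
    have h10 := congrFun (congrFun hM1 1) 0
    have g00 := congrFun (congrFun hM2 0) 0
    have g01 := congrFun (congrFun hM2 0) 1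
    simp only [Matrix.mul_apply, Fin.sum_univ_two, hatSigma, Matrix.one_apply,
      Matrix.cons_val', Matrix.cons_val_zero, Matrix.cons_val_one, Matrix.head_cons,
      Matrix.head_fin_const, Matrix.empty_val', Matrix.cons_val_fin_one, Matrix.of_apply,
      mul_neg, if_true, if_false, Fin.isValue, ne_eq, one_ne_zero, not_false_eq_true,
      Matrix.one_apply_eq, Matrix.one_apply_ne, zero_ne_one, reduceIte] at h00 h10 g00 g01
    by_cases hc : M 1 0 = 0
    · -- lower-left entry vanishes: M is upper triangular
      rw [hc] at h00 g00
      rw [h0, mul_zero, neg_zero, add_zero] at h00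
      rw [mul_zero, add_zero] at g00
      -- h00 : M 0 0 * σ (M 1 1) = 1, g00 : σ (M 1 1) * M 0 0 = 1
      rw [neg_mul] at g01
      have hb : σ (M 1 1) * M 0 1 = σ (M 0 1) * M 1 1 :=
        eq_of_sub_eq_zero (by rw [sub_eq_add_neg]; exact g01)
      have hτ : σ (σ (M 1 1) * M 0 1) = σ (M 1 1) * M 0 1 := by
        rw [hmul, hinvol]
        exact hb.symm
      have hD : !![M 0 0, 0; 0, σ (σ (M 1 1))] ∈ Submonoid.closure (ElemMatrices σ) :=
        hDmem (M 0 0) (σ (M 1 1)) h00 g00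
      have hMeq : M = !![M 0 0, 0; 0, σ (σ (M 1 1))] * !![1, σ (M 1 1) * M 0 1; 0, 1] := by
        ext i j
        fin_cases i <;> fin_cases j <;>
          simp [Matrix.mul_apply, Fin.sum_univ_two, hinvol, hc, ← mul_assoc, h00]
      rw [hMeq]
      exact Submonoid.mul_mem _ hD (hUmem _ hτ)
    · -- Euclidean step
      have hcd : M 1 0 * σ (M 1 1) = M 1 1 * σ (M 1 0) :=
        eq_of_sub_eq_zero (by rw [sub_eq_add_neg]; exact h10)
      have hfix : σ (M 1 1 * σ (M 1 0)) = M 1 1 * σ (M 1 0) := by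
        rw [hmul, hinvol]
        exact hcd
      obtain ⟨q, hq, hlt⟩ := hEuc (M 1 1) (M 1 0) hc hfix
      set M' : Matrix (Fin 2) (Fin 2) R :=
        !![M 0 1 - M 0 0 * q, -(M 0 0); M 1 1 - M 1 0 * q, -(M 1 0)] with hM'def
      have hUq : (!![1, -q; 0, 1] : Matrix (Fin 2) (Fin 2) R) ∈ SLsub σ hadd hmul h0 h1 := by
        constructor <;> (ext i j; fin_cases i <;> fin_cases j <;>
          simp [hatSigma, Matrix.mul_apply, Fin.sum_univ_two, h0, h1, hneg, hq,
            Matrix.one_apply])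
      have hT : (!![0, -1; 1, 0] : Matrix (Fin 2) (Fin 2) R) ∈ SLsub σ hadd hmul h0 h1 := by
        constructor <;> (ext i j; fin_cases i <;> fin_cases j <;>
          simp [hatSigma, Matrix.mul_apply, Fin.sum_univ_two, h0, h1, hneg,
            Matrix.one_apply])
      have hMSL : M ∈ SLsub σ hadd hmul h0 h1 := ⟨hM1, hM2⟩
      have hM'eq : M' = M * !![1, -q; 0, 1] * !![0, -1; 1, 0] := by
        ext i j
        fin_cases i <;> fin_cases j <;>
          (simp [hM'def, Matrix.mul_apply, Fin.sum_univ_two] <;> abel)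
      have hM'SL : M' ∈ SLsub σ hadd hmul h0 h1 := by
        rw [hM'eq]
        exact Submonoid.mul_mem _ (Submonoid.mul_mem _ hMSL hUq) hT
      have hM'c : M' 1 0 = M 1 1 - M 1 0 * q := by simp [hM'def]
      have hM'mem : M' ∈ Submonoid.closure (ElemMatrices σ) := by
        refine ih (Φ (M' 1 0)) ?_ M' hM'SL.1 hM'SL.2 rfl
        rw [hM'c, ← hw]
        exact hlt
      have hfin : M = M' * !![0, 1; -1, 0] * !![1, q; 0, 1] := by
        ext i j
        fin_cases i <;> fin_cases j <;>
          (simp [hM'def, Matrix.mul_apply, Fin.sum_univ_two] <;> abel)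
      rw [hfin]
      exact Submonoid.mul_mem _ (Submonoid.mul_mem _ hM'mem hSmem) (hUmem q hq)
  intro M
  constructor
  · intro h
    exact main (Φ (M 1 0)) M h.1 h.2 rfl
  · intro h
    exact easy M h
end

section
/- Let (R′,σ) be a ring with involution having no zero divisors, and let R ⊆ R′ be a subring closed under σ such that R⁺ = (R′)⁺ (every σ-fixed element of R′ lies in R). If R′ is σ-Euclidean, then R is σ-Euclidean. -/
/-- A subring `O` of a ring `R'`, with involution `σ` on `R'`, is `σ`-Euclidean if there
are a well-ordered set `W` and a stathm `Φ : O → W` such that for all `a b ∈ O` with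
`b ≠ 0` and `a * σ b ∈ O⁺` there is `q ∈ O⁺` with `Φ (a - b * q) < Φ b`. -/
def SubringEuclidean {R' : Type*} [Ring R'] (σ : R' → R') (O : Subring R') : Prop :=
  ∃ (W : Type) (r : W → W → Prop) (Φ : O → W), IsWellOrder W r ∧
    ∀ a b : O, b ≠ 0 → ((a : R') * σ (b : R') ∈ O) →
      σ ((a : R') * σ (b : R')) = (a : R') * σ (b : R') →
      ∃ q : O, σ (q : R') = (q : R') ∧ r (Φ (a - b * q)) (Φ b)

/-- If `(R', σ)` is a ring with involution without zero divisors,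
`R ⊆ R'` a subring closed under `σ` with `R⁺ = (R')⁺`, and `R'` is `σ`-Euclidean,
then `R` is `σ`-Euclidean. -/
theorem subring_euclidean_of_euclidean {R' : Type*} [Ring R'] (σ : R' → R')
    (hadd : ∀ x y : R', σ (x + y) = σ x + σ y)
    (hmul : ∀ x y : R', σ (x * y) = σ y * σ x)
    (hinvol : ∀ x : R', σ (σ x) = x)
    (hnzd : ∀ x y : R', x * y = 0 → x = 0 ∨ y = 0)
    (R : Subring R') (hclosed : ∀ x ∈ R, σ x ∈ R)
    (hfix : ∀ x : R', σ x = x → x ∈ R)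
    (heuc : SigmaEuclidean σ) :
    SubringEuclidean σ R := by
  obtain ⟨W, r, Φ, hwo, h⟩ := heuc
  refine ⟨W, r, fun x => Φ (x : R'), hwo, ?_⟩
  intro a b hb _ hfixab
  obtain ⟨q, hq, hlt⟩ := h (a : R') (b : R') (by exact_mod_cast hb) hfixab
  exact ⟨⟨q, hfix q hq⟩, hq, by simpa using hlt⟩
end

section
/- Let (R′,σ) be a ring with involution having no zero divisors, and let R ⊆ R′ be a subring closed under σ such that (R,σ) is σ-Euclidean. If there exists a nonzero x ∈ R with x·R′ ⊆ R, then R⁺ = (R′)⁺: every σ-fixed element of R′ already lies in R. -/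
/-- If `(R', σ)` is a ring with involution without zero divisors,
`R ⊆ R'` a subring closed under `σ` which is `σ`-Euclidean, and there is a nonzero
`x ∈ R` with `x·R' ⊆ R`, then every `σ`-fixed element of `R'` lies in `R`. -/
theorem fixed_elements_in_euclidean_subring {R' : Type*} [Ring R'] (σ : R' → R')
    (hadd : ∀ x y : R', σ (x + y) = σ x + σ y)
    (hmul : ∀ x y : R', σ (x * y) = σ y * σ x)
    (hinvol : ∀ x : R', σ (σ x) = x)
    (hnzd : ∀ x y : R', x * y = 0 → x = 0 ∨ y = 0)
    (R : Subring R') (hclosed : ∀ x ∈ R, σ x ∈ R)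
    (heuc : SubringEuclidean σ R)
    (hconduct : ∃ x : R', x ∈ R ∧ x ≠ 0 ∧ ∀ y : R', x * y ∈ R) :
    ∀ y : R', σ y = y → y ∈ R := by
  obtain ⟨W, r, Φ, hwo, heu⟩ := heuc
  obtain ⟨x, hxR, hx0, hxc⟩ := hconduct
  intro y hy
  set S : Set R := {b | b ≠ 0 ∧ ∃ z : R', (b : R') = x * z} with hSdef
  have hwf : WellFounded r := hwo.toIsWellFounded.wf
  have hxS : (⟨x, hxR⟩ : R) ∈ S := by
    refine ⟨?_, 1, by simp⟩
    intro h
    exact hx0 (by simpa using congrArg (Subtype.val) h)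
  obtain ⟨w, hwmem, hwmin⟩ := hwf.has_min (Φ '' S) ⟨Φ ⟨x, hxR⟩, ⟨_, hxS, rfl⟩⟩
  obtain ⟨b, hbS, hbw⟩ := hwmem
  obtain ⟨hb0, z, hz⟩ := hbS
  have hby : (b : R') * y ∈ R := by rw [hz, mul_assoc]; exact hxc (z * y)
  set a : R := ⟨(b : R') * y, hby⟩ with hadef
  have hmem : (a : R') * σ (b : R') ∈ R := R.mul_mem hby (hclosed _ b.2)
  have hfix : σ ((a : R') * σ (b : R')) = (a : R') * σ (b : R') := by
    show σ (((b : R') * y) * σ (b : R')) = ((b : R') * y) * σ (b : R')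
    rw [hmul, hinvol, hmul, hy, mul_assoc]
  obtain ⟨q, hq, hlt⟩ := heu a b hb0 hmem hfix
  have key : ((a - b * q : R) : R') = (b : R') * (y - (q : R')) := by
    push_cast [hadef]
    rw [mul_sub]
  by_cases hc : a - b * q = 0
  · have : (b : R') * (y - (q : R')) = 0 := by rw [← key, hc]; simp
    rcases hnzd _ _ this with h | h
    · exact absurd (Subtype.ext h) hb0
    · have : y = (q : R') := sub_eq_zero.mp h
      rw [this]; exact q.2
  · exfalso
    refine hwmin (Φ (a - b * q)) ⟨a - b * q, ⟨hc, z * (y - (q : R')), ?_⟩, rfl⟩ (hbw ▸ hlt)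
    rw [key, hz, mul_assoc]
end

section
/- Let (R′,σ) be a ring with involution having no zero divisors, and let R ⊆ R′ be a subring closed under σ such that (R,σ) is σ-Euclidean. If there exists a nonzero element k of the center of R′ with σ(k) = k and k·R′ ⊆ R, then R′ is σ-Euclidean. -/
/-- If `(R', σ)` is a ring with involution without zero divisors,
`R ⊆ R'` a subring closed under `σ` which is `σ`-Euclidean, and there is a nonzero
central σ-fixed `k ∈ R'` with `k·R' ⊆ R`, then `R'` is `σ`-Euclidean. -/
theorem euclidean_of_subring_euclidean {R' : Type*} [Ring R'] (σ : R' → R')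
    (hadd : ∀ x y : R', σ (x + y) = σ x + σ y)
    (hmul : ∀ x y : R', σ (x * y) = σ y * σ x)
    (hinvol : ∀ x : R', σ (σ x) = x)
    (hnzd : ∀ x y : R', x * y = 0 → x = 0 ∨ y = 0)
    (R : Subring R') (hclosed : ∀ x ∈ R, σ x ∈ R)
    (heuc : SubringEuclidean σ R)
    (k : R') (hk0 : k ≠ 0) (hkcentral : ∀ y : R', k * y = y * k)
    (hkfix : σ k = k) (hkR : ∀ y : R', k * y ∈ R) :
    SigmaEuclidean σ := by
  obtain ⟨W, r, Φ, hwo, hΦ⟩ := heuc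
  refine ⟨W, r, fun x => Φ ⟨k * x, hkR x⟩, hwo, ?_⟩
  intro a b hb hfix
  have hba : b * σ a = a * σ b := by
    conv_rhs => rw [← hfix, hmul, hinvol]
  have hb' : (⟨k * b, hkR b⟩ : R) ≠ 0 := by
    intro h
    have : k * b = 0 := congrArg Subtype.val h
    rcases hnzd k b this with h1 | h1
    · exact hk0 h1
    · exact hb h1
  have key : (k * a) * σ (k * b) = k * (a * σ b * k) := by
    rw [hmul, hkfix]
    noncomm_ring
  have hmem : ((⟨k * a, hkR a⟩ : R) : R') * σ ((⟨k * b, hkR b⟩ : R) : R') ∈ R := by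
    show (k * a) * σ (k * b) ∈ R
    rw [key]
    exact hkR _
  have hfix' : σ (((⟨k * a, hkR a⟩ : R) : R') * σ ((⟨k * b, hkR b⟩ : R) : R'))
      = ((⟨k * a, hkR a⟩ : R) : R') * σ ((⟨k * b, hkR b⟩ : R) : R') := by
    show σ ((k * a) * σ (k * b)) = (k * a) * σ (k * b)
    rw [hmul (k * a) (σ (k * b)), hinvol, hmul k a, hmul k b, hkfix]
    calc (k * b) * (σ a * k) = (b * σ a) * (k * k) := by
          simp only [hkcentral, mul_assoc]
      _ = (a * σ b) * (k * k) := by rw [hba]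
      _ = (k * a) * (σ b * k) := by
          simp only [hkcentral, mul_assoc]
  obtain ⟨q, hq, hlt⟩ := hΦ ⟨k * a, hkR a⟩ ⟨k * b, hkR b⟩ hb' hmem hfix'
  refine ⟨(q : R'), hq, ?_⟩
  have heq : (⟨k * a, hkR a⟩ : R) - ⟨k * b, hkR b⟩ * q = ⟨k * (a - b * q), hkR _⟩ := by
    apply Subtype.ext
    show k * a - k * b * (q : R') = k * (a - b * (q : R'))
    noncomm_ring
  rwa [heq] at hlt
end

section
/- Let R > 0 be a real number, let z be a Hamilton quaternion with π_k(z) > 0, and let c, d be Hamilton quaternions such that c·(d^♯) is fixed by ♯. If nrm(c·z + d) < R, then nrm(c) < R / π_k(z)² and nrm(d) < (√R + √(nrm(c·z)))². -/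
/-- The orthogonal involution `♯` on the Hamilton quaternions negating the `k`-component. -/
def qSharp (q : Quaternion ℝ) : Quaternion ℝ := ⟨q.re, q.imI, q.imJ, -q.imK⟩

lemma qSharp_re (q : Quaternion ℝ) : (qSharp q).re = q.re := rfl
lemma qSharp_imI (q : Quaternion ℝ) : (qSharp q).imI = q.imI := rfl
lemma qSharp_imJ (q : Quaternion ℝ) : (qSharp q).imJ = q.imJ := rfl
lemma qSharp_imK (q : Quaternion ℝ) : (qSharp q).imK = -q.imK := rfl

lemma normSq_qSharp (q : Quaternion ℝ) :
    Quaternion.normSq (qSharp q) = Quaternion.normSq q := by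
  simp [Quaternion.normSq_def', qSharp_re, qSharp_imI, qSharp_imJ, qSharp_imK]

/-- for `R > 0`, `z ∈ ℍ` with `π_k(z) > 0`, and `c, d ∈ ℍ` with `c·d^♯`
fixed by `♯`, if `nrm(c·z + d) < R` then `nrm(c) < R / π_k(z)²` and
`nrm(d) < (√R + √(nrm(c·z)))²`. -/
theorem trivial_bound (R : ℝ) (hR : 0 < R) (z : Quaternion ℝ) (hz : 0 < z.imK)
    (c d : Quaternion ℝ) (hcd : qSharp (c * qSharp d) = c * qSharp d)
    (hlt : Quaternion.normSq (c * z + d) < R) :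
    Quaternion.normSq c < R / z.imK ^ 2 ∧
    Quaternion.normSq d <
      (Real.sqrt R + Real.sqrt (Quaternion.normSq (c * z))) ^ 2 := by
  constructor
  · -- first part
    have h0 : (c * qSharp d).imK = 0 := by
      have h := congrArg QuaternionAlgebra.imK hcd
      rw [qSharp_imK] at h
      linarith
    have hkey : ((c * z + d) * qSharp c).imK = z.imK * Quaternion.normSq c := by
      simp only [Quaternion.imK_mul, Quaternion.re_add, Quaternion.imI_add,
        Quaternion.imJ_add, Quaternion.imK_add, Quaternion.re_mul, Quaternion.imI_mul,
        Quaternion.imJ_mul, qSharp_re, qSharp_imI, qSharp_imJ, qSharp_imK,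
        Quaternion.normSq_def'] at *
      ring_nf
      ring_nf at h0
      linarith [h0]
    have hsq : ((c * z + d) * qSharp c).imK ^ 2 ≤
        Quaternion.normSq ((c * z + d) * qSharp c) := by
      rw [Quaternion.normSq_def']
      nlinarith [sq_nonneg ((c * z + d) * qSharp c).re,
        sq_nonneg ((c * z + d) * qSharp c).imI, sq_nonneg ((c * z + d) * qSharp c).imJ]
    rw [hkey, map_mul, normSq_qSharp] at hsq
    rcases eq_or_lt_of_le (Quaternion.normSq_nonneg (a := c)) with h | h
    · rw [← h]; positivity
    · rw [lt_div_iff₀ (pow_pos hz 2)]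
      nlinarith [hsq, h, hlt, Quaternion.normSq_nonneg (a := c)]
  · -- second part
    have h1 : ‖c * z + d‖ < Real.sqrt R := by
      rw [← Real.sqrt_sq (norm_nonneg _)]
      apply Real.sqrt_lt_sqrt (by positivity)
      calc ‖c * z + d‖ ^ 2 = Quaternion.normSq (c * z + d) := by
            rw [Quaternion.normSq_eq_norm_mul_self]; ring
        _ < R := hlt
    have h2 : ‖d‖ ≤ ‖c * z + d‖ + ‖c * z‖ := by
      calc ‖d‖ = ‖(c * z + d) - c * z‖ := by rw [add_sub_cancel_left]
        _ ≤ ‖c * z + d‖ + ‖c * z‖ := norm_sub_le _ _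
    have h3 : Real.sqrt (Quaternion.normSq (c * z)) = ‖c * z‖ := by
      rw [Quaternion.normSq_eq_norm_mul_self, Real.sqrt_mul_self (norm_nonneg _)]
    have h4 : ‖d‖ < Real.sqrt R + Real.sqrt (Quaternion.normSq (c * z)) := by
      rw [h3]; linarith
    calc Quaternion.normSq d = ‖d‖ ^ 2 := by
          rw [Quaternion.normSq_eq_norm_mul_self]; ring
      _ < (Real.sqrt R + Real.sqrt (Quaternion.normSq (c * z))) ^ 2 := by
          apply pow_lt_pow_left₀ h4 (norm_nonneg _) (by norm_num)
end

section
/- Let z be a point of the hyperbolic upper half-plane with normSq(z) > 1, where normSq(z) = Re(z)² + Im(z)², and let z′ = −1/z (which again lies in the upper half-plane). Set z₀ = −2·Re(z)/(normSq(z) − 1) and r = √((normSq(z) + 1)² − 4·Im(z)²)/(normSq(z) − 1). Then for every point w of the upper half-plane, dist(w, z) = dist(w, z′) if and only if |w − z₀| = r; that is, the perpendicular bisector of the geodesic through z and −1/z is the circle with center z₀ and radius r. -/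
open UpperHalfPlane

/-- for `z` in the hyperbolic upper half-plane with `normSq z > 1` and
`z′ = -1/z`, the perpendicular bisector of the geodesic through `z` and `z′` is the
circle with center `z₀ = -2·Re(z)/(normSq z − 1)` and radius
`r = √((normSq z + 1)² − 4·Im(z)²)/(normSq z − 1)`. -/
theorem perpendicular_bisector (z z' : UpperHalfPlane)
    (hz : 1 < Complex.normSq (z : ℂ))
    (hz' : (z' : ℂ) = -((z : ℂ)⁻¹)) :
    ∀ w : UpperHalfPlane,
      dist w z = dist w z' ↔
        ‖((w : ℂ) -
            (((-2 * (z : ℂ).re / (Complex.normSq (z : ℂ) - 1)) : ℝ) : ℂ))‖ =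
          Real.sqrt ((Complex.normSq (z : ℂ) + 1) ^ 2 - 4 * (z : ℂ).im ^ 2) /
            (Complex.normSq (z : ℂ) - 1) := by
  intro w
  have hzim : 0 < (z : ℂ).im := z.im_pos
  have hwim : 0 < (w : ℂ).im := w.im_pos
  have hN : 0 < Complex.normSq (z : ℂ) := by linarith
  have hN1 : 0 < Complex.normSq (z : ℂ) - 1 := by linarith
  have hz0 : (z : ℂ) ≠ 0 := z.ne_zero
  have him' : (z' : ℂ).im = (z : ℂ).im / Complex.normSq (z : ℂ) := by
    rw [hz', Complex.neg_im, Complex.inv_im, neg_div, neg_neg]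
  have him2 : z'.im = z.im / Complex.normSq (z : ℂ) := by
    rw [← UpperHalfPlane.coe_im z', ← UpperHalfPlane.coe_im z, him']
  have hzim' : 0 < (z' : ℂ).im := z'.im_pos
  -- Step 1: dist equality iff normSq (w - z) = normSq (w*z + 1)
  have step1 : dist w z = dist w z' ↔
      Complex.normSq ((w : ℂ) - z) = Complex.normSq ((w : ℂ) * z + 1) := by
    rw [UpperHalfPlane.dist_eq, UpperHalfPlane.dist_eq,
      mul_right_inj' (two_ne_zero), Real.arsinh_inj]
    have hd1 : (0:ℝ) ≤ dist ((w : ℂ)) ((z : ℂ)) / (2 * Real.sqrt (w.im * z.im)) := by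
      positivity
    have hd2 : (0:ℝ) ≤ dist ((w : ℂ)) ((z' : ℂ)) / (2 * Real.sqrt (w.im * z'.im)) := by
      positivity
    rw [← sq_eq_sq₀ hd1 hd2]
    have e1 : (dist ((w : ℂ)) ((z : ℂ)) / (2 * Real.sqrt (w.im * z.im))) ^ 2 =
        Complex.normSq ((w : ℂ) - z) / (4 * (w.im * z.im)) := by
      rw [div_pow, mul_pow, Real.sq_sqrt (by positivity), Complex.dist_eq, Complex.sq_norm]
      norm_num
    have e2 : (dist ((w : ℂ)) ((z' : ℂ)) / (2 * Real.sqrt (w.im * z'.im))) ^ 2 =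
        Complex.normSq ((w : ℂ) - z') / (4 * (w.im * z'.im)) := by
      rw [div_pow, mul_pow, Real.sq_sqrt (by positivity), Complex.dist_eq, Complex.sq_norm]
      norm_num
    rw [e1, e2]
    have e3 : (w : ℂ) - z' = ((w : ℂ) * z + 1) * (z : ℂ)⁻¹ := by
      rw [hz']; field_simp; ring
    have hwim0 : w.im ≠ 0 := by rw [← UpperHalfPlane.coe_im]; exact ne_of_gt hwim
    have hzim0 : z.im ≠ 0 := by rw [← UpperHalfPlane.coe_im]; exact ne_of_gt hzim
    have hN0 : Complex.normSq (z : ℂ) ≠ 0 := ne_of_gt hN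
    have e4 : Complex.normSq ((w : ℂ) - z') / (4 * (w.im * z'.im)) =
        Complex.normSq ((w : ℂ) * z + 1) / (4 * (w.im * z.im)) := by
      rw [e3, Complex.normSq_mul, Complex.normSq_inv, him2]
      field_simp
    rw [e4, div_eq_div_iff (by positivity) (by positivity)]
    constructor
    · intro h
      exact mul_right_cancel₀ (by positivity) h
    · intro h; rw [h]
  rw [step1]
  -- Step 2: the circle condition
  set x := (z : ℂ).re with hx
  set y := (z : ℂ).im with hy
  set N := Complex.normSq (z : ℂ) with hNdef
  have hNxy : N = x * x + y * y := Complex.normSq_apply _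
  have hT : (0:ℝ) ≤ (N + 1) ^ 2 - 4 * y ^ 2 := by
    nlinarith [sq_nonneg (N - 1), sq_nonneg x]
  have habs : (0:ℝ) ≤ ‖(w : ℂ) - (((-2 * x / (N - 1)) : ℝ) : ℂ)‖ :=
    norm_nonneg _
  have hrhs : (0:ℝ) ≤ Real.sqrt ((N + 1) ^ 2 - 4 * y ^ 2) / (N - 1) := by positivity
  have circ : (‖(w : ℂ) - (((-2 * x / (N - 1)) : ℝ) : ℂ)‖ =
      Real.sqrt ((N + 1) ^ 2 - 4 * y ^ 2) / (N - 1)) ↔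
      (((w : ℂ).re * (N - 1) + 2 * x) ^ 2 + ((w : ℂ).im * (N - 1)) ^ 2 =
        (N + 1) ^ 2 - 4 * y ^ 2) := by
    rw [← sq_eq_sq₀ habs hrhs, Complex.sq_norm, div_pow, Real.sq_sqrt hT,
      eq_div_iff (by positivity)]
    have hq : Complex.normSq ((w : ℂ) - (((-2 * x / (N - 1)) : ℝ) : ℂ)) * (N - 1) ^ 2 =
        ((w : ℂ).re * (N - 1) + 2 * x) ^ 2 + ((w : ℂ).im * (N - 1)) ^ 2 := by
      simp only [Complex.normSq_apply, Complex.sub_re, Complex.sub_im,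
        Complex.ofReal_re, Complex.ofReal_im]
      field_simp
      ring
    rw [hq]
  rw [circ]
  simp only [Complex.normSq_apply, Complex.sub_re, Complex.sub_im, Complex.add_re,
    Complex.add_im, Complex.mul_re, Complex.mul_im, Complex.one_re, Complex.one_im]
  rw [hNxy]
  have hs : 0 < x * x + y * y - 1 := by rw [← hNxy]; exact hN1
  constructor
  · intro h
    linear_combination (1 - (x * x + y * y)) * h
  · intro h
    have h2 : ((((w:ℂ).re - x) * ((w:ℂ).re - x) + ((w:ℂ).im - y) * ((w:ℂ).im - y))
        - (((w:ℂ).re * x - (w:ℂ).im * y + 1) * ((w:ℂ).re * x - (w:ℂ).im * y + 1)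
          + ((w:ℂ).re * y + (w:ℂ).im * x + 0) * ((w:ℂ).re * y + (w:ℂ).im * x + 0)))
        * (x * x + y * y - 1) = 0 := by
      linear_combination -h
    rcases mul_eq_zero.mp h2 with h3 | h3
    · linarith
    · exact absurd h3 (ne_of_gt hs)
end

section
/- Let H = (−1,−1/ℚ) be the rational Hamilton quaternions with orthogonal involution ♯(w + xi + yj + tk) = w + xi + yj − tk, and let O be the Hurwitz order, the ℤ-span of 1, i, j, (1 + i + j + k)/2. Then O is norm ♯-Euclidean: for all a, b ∈ O with b ≠ 0 and a·♯(b) ∈ O⁺, there exists q ∈ O⁺ with nrm(a − b·q) < nrm(b). -/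
/-- The reduced norm `nrm(z) = z·z̄` of a rational quaternion, as a rational number. -/
def qnrm {α β : ℚ} (q : QuaternionAlgebra ℚ α 0 β) : ℚ := (q * star q).re

/-- The orthogonal involution `♯` on a quaternion algebra negating the `k`-component. -/
def kSharp {R : Type*} [CommRing R] {c₁ c₂ : R} (q : QuaternionAlgebra R c₁ 0 c₂) :
    QuaternionAlgebra R c₁ 0 c₂ := ⟨q.re, q.imI, q.imJ, -q.imK⟩

/-- The Hurwitz order: the `ℤ`-span of `1, i, j, (1 + i + j + k)/2` in `(−1,−1/ℚ)`. -/
def HurwitzOrder : Submodule ℤ (QuaternionAlgebra ℚ (-1) 0 (-1)) :=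
  Submodule.span ℤ
    {(1 : QuaternionAlgebra ℚ (-1) 0 (-1)), ⟨0, 1, 0, 0⟩, ⟨0, 0, 1, 0⟩,
      ⟨1/2, 1/2, 1/2, 1/2⟩}

lemma qnrm_def (q : QuaternionAlgebra ℚ (-1) 0 (-1)) :
    qnrm q = q.re^2 + q.imI^2 + q.imJ^2 + q.imK^2 := by
  simp [qnrm, QuaternionAlgebra.re_mul]; ring

lemma qnrm_mul (p q : QuaternionAlgebra ℚ (-1) 0 (-1)) :
    qnrm (p * q) = qnrm p * qnrm q := by
  simp only [qnrm_def, QuaternionAlgebra.re_mul, QuaternionAlgebra.imI_mul,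
    QuaternionAlgebra.imJ_mul, QuaternionAlgebra.imK_mul]; ring

lemma int_mk_mem (r0 r1 r2 : ℤ) :
    (⟨(r0 : ℚ), (r1 : ℚ), (r2 : ℚ), 0⟩ : QuaternionAlgebra ℚ (-1) 0 (-1)) ∈ HurwitzOrder := by
  have h : (⟨(r0 : ℚ), (r1 : ℚ), (r2 : ℚ), 0⟩ : QuaternionAlgebra ℚ (-1) 0 (-1)) =
      r0 • (1 : QuaternionAlgebra ℚ (-1) 0 (-1)) + r1 • (⟨0,1,0,0⟩ : QuaternionAlgebra ℚ (-1) 0 (-1))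
        + r2 • (⟨0,0,1,0⟩ : QuaternionAlgebra ℚ (-1) 0 (-1)) := by
    ext <;> simp
  rw [h]
  refine Submodule.add_mem _ (Submodule.add_mem _ ?_ ?_) ?_ <;>
    exact Submodule.smul_mem _ _ (Submodule.subset_span (by simp))

lemma round_sq_bound (x : ℚ) (n : ℚ) (hn : 0 < n) :
    (x - n * (round (x / n) : ℚ))^2 ≤ (n / 2)^2 := by
  have h1 : |x / n - (round (x / n) : ℚ)| ≤ 1 / 2 := abs_sub_round _
  rw [abs_le] at h1
  have hx : x - n * (round (x / n) : ℚ) = n * (x / n - (round (x / n) : ℚ)) := by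
    field_simp
  rw [hx]
  have ht : (x / n - (round (x / n) : ℚ))^2 ≤ 1/4 := by nlinarith [h1.1, h1.2]
  nlinarith [sq_nonneg n, ht]

/-- the Hurwitz order in `(−1,−1/ℚ)` with the involution `♯` negating the
`k`-component is norm `♯`-Euclidean. -/
theorem hurwitz_norm_sharp_euclidean :
    ∀ a b : QuaternionAlgebra ℚ (-1) 0 (-1), a ∈ HurwitzOrder → b ∈ HurwitzOrder →
      b ≠ 0 → a * kSharp b ∈ HurwitzOrder → kSharp (a * kSharp b) = a * kSharp b →
      ∃ q ∈ HurwitzOrder, kSharp q = q ∧ qnrm (a - b * q) < qnrm b := by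
  intro a b _ _ hbne _ hsym
  set n : ℚ := qnrm b with hn_def
  have hn : 0 < n := by
    rw [hn_def, qnrm_def]
    rcases lt_or_eq_of_le (by positivity : (0:ℚ) ≤ b.re^2 + b.imI^2 + b.imJ^2 + b.imK^2) with h | h
    · exact h
    · exfalso; apply hbne
      have h0 : b.re = 0 := by nlinarith [sq_nonneg b.re, sq_nonneg b.imI, sq_nonneg b.imJ, sq_nonneg b.imK]
      have h1 : b.imI = 0 := by nlinarith [sq_nonneg b.re, sq_nonneg b.imI, sq_nonneg b.imJ, sq_nonneg b.imK]
      have h2 : b.imJ = 0 := by nlinarith [sq_nonneg b.re, sq_nonneg b.imI, sq_nonneg b.imJ, sq_nonneg b.imK]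
      have h3 : b.imK = 0 := by nlinarith [sq_nonneg b.re, sq_nonneg b.imI, sq_nonneg b.imJ, sq_nonneg b.imK]
      ext <;> simp [h0, h1, h2, h3]
  set c : QuaternionAlgebra ℚ (-1) 0 (-1) := star b * a with hc_def
  have hc3 : c.imK = 0 := by
    have h1 : (a * kSharp b).imK = 0 := by
      have h := congrArg QuaternionAlgebra.imK hsym
      have h' : -(a * kSharp b).imK = (a * kSharp b).imK := h
      linarith
    have h2 : c.imK = (a * kSharp b).imK := by
      simp only [hc_def, kSharp, QuaternionAlgebra.imK_mul, QuaternionAlgebra.re_star,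
        QuaternionAlgebra.imI_star, QuaternionAlgebra.imJ_star, QuaternionAlgebra.imK_star]
      ring
    rw [h2, h1]
  set r0 : ℤ := round (c.re / n)
  set r1 : ℤ := round (c.imI / n)
  set r2 : ℤ := round (c.imJ / n)
  set q : QuaternionAlgebra ℚ (-1) 0 (-1) := ⟨(r0 : ℚ), (r1 : ℚ), (r2 : ℚ), 0⟩ with hq_def
  refine ⟨q, int_mk_mem r0 r1 r2, by simp [kSharp, hq_def], ?_⟩
  -- key: star b * (a - b * q) = c - n • q (componentwise)
  have hnb : n = b.re^2 + b.imI^2 + b.imJ^2 + b.imK^2 := by rw [hn_def, qnrm_def]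
  have hd : star b * (a - b * q) =
      ⟨c.re - n * r0, c.imI - n * r1, c.imJ - n * r2, 0⟩ := by
    ext
    · simp only [hc_def, hnb, QuaternionAlgebra.re_mul, QuaternionAlgebra.imI_mul,
        QuaternionAlgebra.imJ_mul, QuaternionAlgebra.imK_mul, QuaternionAlgebra.re_sub,
        QuaternionAlgebra.imI_sub, QuaternionAlgebra.imJ_sub, QuaternionAlgebra.imK_sub,
        QuaternionAlgebra.re_star, QuaternionAlgebra.imI_star, QuaternionAlgebra.imJ_star,
        QuaternionAlgebra.imK_star, hq_def]
      ring
    · simp only [hc_def, hnb, QuaternionAlgebra.re_mul, QuaternionAlgebra.imI_mul,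
        QuaternionAlgebra.imJ_mul, QuaternionAlgebra.imK_mul, QuaternionAlgebra.re_sub,
        QuaternionAlgebra.imI_sub, QuaternionAlgebra.imJ_sub, QuaternionAlgebra.imK_sub,
        QuaternionAlgebra.re_star, QuaternionAlgebra.imI_star, QuaternionAlgebra.imJ_star,
        QuaternionAlgebra.imK_star, hq_def]
      ring
    · simp only [hc_def, hnb, QuaternionAlgebra.re_mul, QuaternionAlgebra.imI_mul,
        QuaternionAlgebra.imJ_mul, QuaternionAlgebra.imK_mul, QuaternionAlgebra.re_sub,
        QuaternionAlgebra.imI_sub, QuaternionAlgebra.imJ_sub, QuaternionAlgebra.imK_sub,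
        QuaternionAlgebra.re_star, QuaternionAlgebra.imI_star, QuaternionAlgebra.imJ_star,
        QuaternionAlgebra.imK_star, hq_def]
      ring
    · have hck := hc3
      simp only [hc_def, QuaternionAlgebra.imK_mul, QuaternionAlgebra.re_star,
        QuaternionAlgebra.imI_star, QuaternionAlgebra.imJ_star, QuaternionAlgebra.imK_star] at hck
      simp only [hc_def, QuaternionAlgebra.re_mul, QuaternionAlgebra.imI_mul,
        QuaternionAlgebra.imJ_mul, QuaternionAlgebra.imK_mul, QuaternionAlgebra.re_sub,
        QuaternionAlgebra.imI_sub, QuaternionAlgebra.imJ_sub, QuaternionAlgebra.imK_sub,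
        QuaternionAlgebra.re_star, QuaternionAlgebra.imI_star, QuaternionAlgebra.imJ_star,
        QuaternionAlgebra.imK_star, hq_def]
      linear_combination hck
  have hqsb : qnrm (star b) = n := by rw [hn_def, qnrm_def, qnrm_def]; simp; try ring
  have hmul : n * qnrm (a - b * q) = qnrm (star b * (a - b * q)) := by
    rw [qnrm_mul, hqsb]
  have hlhs : qnrm (star b * (a - b * q)) =
      (c.re - n * r0)^2 + (c.imI - n * r1)^2 + (c.imJ - n * r2)^2 := by
    rw [hd, qnrm_def]; ring
  have h0 := round_sq_bound c.re n hn
  have h1 := round_sq_bound c.imI n hn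
  have h2 := round_sq_bound c.imJ n hn
  have hfin : n * qnrm (a - b * q) ≤ 3 * (n / 2)^2 := by
    rw [hmul, hlhs]; linarith
  have : n * qnrm (a - b * q) < n * n := by nlinarith
  exact lt_of_mul_lt_mul_left this hn.le
end
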